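/- Let k ≥ 2 and let i₁, i₂, t be positive integers and η₁, η₂, ε > 0 constants. There exist η > 0 and an integer n₀, depending only on k, i₁, i₂, t, η₁, η₂ and ε, such that for every k-graph F on t vertices, every k-graph H on n ≥ n₀ vertices and all distinct vertices x, y ∈ V(H): if y is (F, i₁, η₁)-close to x and |Ñ_{F,i₂,η₂}(x)| ≥ ε·n, then x is (F, i₁+i₂, η)-close to y. -/

import Mathlib

open Finset

/-- `A` is the vertex set of a copy of the hypergraph with vertex type `V` and edge set `EF`
inside the hypergraph on `Fin n` with edge set `E`. -/
def IsCopy {n : ℕ} {V : Type} [Fintype V] [DecidableEq V] (E : Finset (Finset (Fin n)))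
    (EF : Finset (Finset V)) (A : Finset (Fin n)) : Prop :=
  ∃ f : V ↪ Fin n, Finset.map f Finset.univ = A ∧ ∀ e ∈ EF, e.map f ∈ E

/-- The induced subhypergraph of `E` on `S` has an `F`-factor, where `F` has vertex type `V`
and edge set `EF`: there are pairwise vertex-disjoint copies of `F` covering exactly `S`. -/
def HasFactorOn {n : ℕ} {V : Type} [Fintype V] [DecidableEq V] (E : Finset (Finset (Fin n)))
    (EF : Finset (Finset V)) (S : Finset (Fin n)) : Prop :=
  ∃ P : Finset (Finset (Fin n)), (∀ A ∈ P, IsCopy E EF A) ∧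
    (P : Set (Finset (Fin n))).PairwiseDisjoint id ∧ P.biUnion id = S

/-- `x` is `(F, i, η)`-close to `y`. -/
def CloseTo {n : ℕ} {V : Type} [Fintype V] [DecidableEq V] (E : Finset (Finset (Fin n)))
    (EF : Finset (Finset V)) (i : ℕ) (η : ℝ) (x y : Fin n) : Prop :=
  η * (n : ℝ) ^ (i * Fintype.card V - 1) ≤
    (({S : Finset (Fin n) | S.card = i * Fintype.card V - 1 ∧ x ∉ S ∧ y ∉ S ∧
      HasFactorOn E EF (insert x S) ∧ HasFactorOn E EF (insert y S)}).ncard : ℝ)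

/-- `H` is `(F, i, η)`-closed. -/
def IsClosedGraph {n : ℕ} {V : Type} [Fintype V] [DecidableEq V] (E : Finset (Finset (Fin n)))
    (EF : Finset (Finset V)) (i : ℕ) (η : ℝ) : Prop :=
  ∀ x y : Fin n, x ≠ y → CloseTo E EF i η x y

/-- `Ñ_{F,i,η}(x)`: the set of vertices `(F, i, η)`-close to `x`. -/
def Ntilde {n : ℕ} {V : Type} [Fintype V] [DecidableEq V] (E : Finset (Finset (Fin n)))
    (EF : Finset (Finset V)) (i : ℕ) (η : ℝ) (x : Fin n) : Set (Fin n) :=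
  {y | CloseTo E EF i η x y}

/-- Degree of the set `T` in the `k`-graph with edge set `E`. -/
noncomputable def degOn {n : ℕ} (E : Finset (Finset (Fin n))) (k : ℕ) (T : Finset (Fin n)) : ℕ :=
  ({S : Finset (Fin n) | S.card = k - T.card ∧ Disjoint S T ∧ S ∪ T ∈ E}).ncard

/-- Edge set of the complete `k`-graph `K_t^k` on `Fin t`. -/
def cliqueEdges (t k : ℕ) : Finset (Finset (Fin t)) :=
  Finset.powersetCard k (Finset.univ : Finset (Fin t))

/-- Edge set of the complete `k`-partite `k`-graph `K_k^k(m)` with parts of size `m`. -/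
def multipartiteEdges (k m : ℕ) : Finset (Finset (Fin k × Fin m)) :=
  Finset.univ.filter (fun e : Finset (Fin k × Fin m) =>
    ∀ i : Fin k, (e.filter (fun v => v.1 = i)).card = 1)

lemma hasFactorOn_union {n : ℕ} {V : Type} [Fintype V] [DecidableEq V]
    {E : Finset (Finset (Fin n))} {EF : Finset (Finset V)} {S T : Finset (Fin n)}
    (hS : HasFactorOn E EF S) (hT : HasFactorOn E EF T) (hd : Disjoint S T) :
    HasFactorOn E EF (S ∪ T) := by
  classical
  obtain ⟨P, hP1, hP2, hP3⟩ := hS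
  obtain ⟨Q, hQ1, hQ2, hQ3⟩ := hT
  have hPS : ∀ A ∈ P, A ⊆ S := fun A hA => hP3 ▸ Finset.subset_biUnion_of_mem id hA
  have hQT : ∀ A ∈ Q, A ⊆ T := fun A hA => hQ3 ▸ Finset.subset_biUnion_of_mem id hA
  refine ⟨P ∪ Q, ?_, ?_, ?_⟩
  · intro A hA
    rcases Finset.mem_union.1 hA with h | h
    exacts [hP1 A h, hQ1 A h]
  · intro A hA B hB hAB
    simp only [Finset.coe_union, Set.mem_union, Finset.mem_coe] at hA hB
    rcases hA with hA | hA <;> rcases hB with hB | hB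
    · exact hP2 hA hB hAB
    · exact Disjoint.mono (hPS _ hA) (hQT _ hB) hd
    · exact Disjoint.mono (hQT _ hA) (hPS _ hB) hd.symm
    · exact hQ2 hA hB hAB
  · have : (P ∪ Q).biUnion id = P.biUnion id ∪ Q.biUnion id := by
      ext a
      simp only [Finset.mem_biUnion, Finset.mem_union, id_eq]
      constructor
      · rintro ⟨A, (h|h), ha⟩
        exacts [Or.inl ⟨A, h, ha⟩, Or.inr ⟨A, h, ha⟩]
      · rintro (⟨A, h, ha⟩|⟨A, h, ha⟩)
        exacts [⟨A, Or.inl h, ha⟩, ⟨A, Or.inr h, ha⟩]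
    rw [this, hP3, hQ3]

lemma count_card_mem_le {n r : ℕ} (v : Fin n) (C : Finset (Finset (Fin n)))
    (hC : ∀ S ∈ C, S.card = r) :
    ((C.filter (fun S => v ∈ S)).card : ℕ) ≤ n ^ (r - 1) := by
  classical
  have h1 : (C.filter (fun S => v ∈ S)).card ≤
      (Finset.powersetCard (r - 1) (Finset.univ : Finset (Fin n))).card := by
    apply Finset.card_le_card_of_injOn (fun S => S.erase v)
    · intro S hS
      simp only [Finset.coe_filter, Set.mem_setOf_eq] at hS
      simp only [Finset.mem_coe, Finset.mem_powersetCard]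
      exact ⟨Finset.subset_univ _, by rw [Finset.card_erase_of_mem hS.2, hC S hS.1]⟩
    · intro S hS T hT hST
      simp only [Finset.coe_filter, Set.mem_setOf_eq] at hS hT
      exact Finset.erase_injOn' v (by exact hS.2) (by exact hT.2) hST
  calc (C.filter (fun S => v ∈ S)).card
      ≤ _ := h1
    _ = (Fintype.card (Fin n)).choose (r - 1) := by
        rw [Finset.card_powersetCard, Finset.card_univ]
    _ ≤ n ^ (r - 1) := by rw [Fintype.card_fin]; exact Nat.choose_le_pow _ _

/-- Additivity of closeness: if `y` is `(F, i₁, η₁)`-close to `x` and the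
`(F, i₂, η₂)`-closed neighbourhood of `x` is large, then `x` is `(F, i₁+i₂, η)`-close
to `y`. -/
theorem close_additive_set (k i₁ i₂ t : ℕ) (η₁ η₂ ε : ℝ)
    (hk : 2 ≤ k) (hi₁ : 1 ≤ i₁) (hi₂ : 1 ≤ i₂) (ht : 1 ≤ t)
    (hη₁ : 0 < η₁) (hη₂ : 0 < η₂) (hε : 0 < ε) :
    ∃ η : ℝ, 0 < η ∧ ∃ n₀ : ℕ, ∀ n : ℕ, n₀ ≤ n →
      ∀ EF : Finset (Finset (Fin t)), (∀ e ∈ EF, e.card = k) →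
      ∀ E : Finset (Finset (Fin n)), (∀ e ∈ E, e.card = k) →
      ∀ x y : Fin n, x ≠ y →
      CloseTo E EF i₁ η₁ y x →
      ε * (n : ℝ) ≤ ((Ntilde E EF i₂ η₂ x).ncard : ℝ) →
      CloseTo E EF (i₁ + i₂) η x y := by
  classical
  set m₁ := i₁ * t - 1 with hm₁def
  set m₂ := i₂ * t - 1 with hm₂def
  set m := (i₁ + i₂) * t - 1 with hmdef
  have hit₁ : 1 ≤ i₁ * t := Nat.one_le_iff_ne_zero.2 (by positivity)
  have hit₂ : 1 ≤ i₂ * t := Nat.one_le_iff_ne_zero.2 (by positivity)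
  have hadd : (i₁ + i₂) * t = i₁ * t + i₂ * t := Nat.add_mul _ _ _
  have hmm : m = m₁ + 1 + m₂ := by omega
  have hmpos : 0 < m := by omega
  have hcpos : (0:ℝ) < (2:ℝ) ^ m * m := by positivity
  refine ⟨η₁ * (ε / 2) * (η₂ / 2) / ((2:ℝ) ^ m * m), by positivity, ?_⟩
  obtain ⟨n₁, hn₁⟩ := exists_nat_ge (2 * ((m₁:ℝ) + 2) / ε)
  obtain ⟨n₂, hn₂⟩ := exists_nat_ge (2 * ((m₁:ℝ) + 1) / η₂)
  refine ⟨max n₁ n₂, ?_⟩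
  intro n hn EF hEF E hE x y hxy hyx hNx
  have hnn₁ : (n₁ : ℝ) ≤ n := Nat.cast_le.2 (le_trans (le_max_left _ _) hn)
  have hnn₂ : (n₂ : ℝ) ≤ n := Nat.cast_le.2 (le_trans (le_max_right _ _) hn)
  have hcond₁ : (m₁:ℝ) + 2 ≤ ε * n / 2 := by
    rw [div_le_iff₀ hε] at hn₁
    nlinarith
  have hcond₂ : (m₁:ℝ) + 1 ≤ η₂ * n / 2 := by
    rw [div_le_iff₀ hη₂] at hn₂
    nlinarith
  -- the three basic good sets
  set gA : Set (Finset (Fin n)) := {S : Finset (Fin n) | S.card = m₁ ∧ y ∉ S ∧ x ∉ S ∧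
      HasFactorOn E EF (insert y S) ∧ HasFactorOn E EF (insert x S)} with hgAdef
  set A : Finset (Finset (Fin n)) := (Set.toFinite gA).toFinset with hAdef
  have hAmem : ∀ S, S ∈ A ↔ (S.card = m₁ ∧ y ∉ S ∧ x ∉ S ∧
      HasFactorOn E EF (insert y S) ∧ HasFactorOn E EF (insert x S)) := by
    intro S
    rw [hAdef, Set.Finite.mem_toFinset, hgAdef]
    rfl
  have hA : η₁ * (n:ℝ) ^ m₁ ≤ (A.card : ℝ) := by
    simp only [CloseTo, Fintype.card_fin, ← hm₁def] at hyx
    rw [Set.ncard_eq_toFinset_card _ (Set.toFinite _)] at hyx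
    exact hyx
  set Nt : Finset (Fin n) := (Set.toFinite (Ntilde E EF i₂ η₂ x)).toFinset with hNtdef
  have hNt : ε * (n:ℝ) ≤ (Nt.card : ℝ) := by
    rw [Set.ncard_eq_toFinset_card _ (Set.toFinite _)] at hNx
    exact hNx
  set C : Fin n → Finset (Finset (Fin n)) := fun z =>
    (Set.toFinite {S : Finset (Fin n) | S.card = m₂ ∧ x ∉ S ∧ z ∉ S ∧
      HasFactorOn E EF (insert x S) ∧ HasFactorOn E EF (insert z S)}).toFinset with hCdef
  have hCmem : ∀ z S, S ∈ C z ↔ (S.card = m₂ ∧ x ∉ S ∧ z ∉ S ∧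
      HasFactorOn E EF (insert x S) ∧ HasFactorOn E EF (insert z S)) := by
    intro z S
    rw [hCdef]
    simp only [Set.Finite.mem_toFinset]
    rfl
  have hCcard : ∀ z ∈ Nt, η₂ * (n:ℝ) ^ m₂ ≤ ((C z).card : ℝ) := by
    intro z hz
    rw [hNtdef, Set.Finite.mem_toFinset] at hz
    have hz' : CloseTo E EF i₂ η₂ x z := hz
    simp only [CloseTo, Fintype.card_fin, ← hm₂def] at hz'
    rw [Set.ncard_eq_toFinset_card _ (Set.toFinite _)] at hz'
    rw [hCdef]
    exact hz'
  -- dependent families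
  set Z : Finset (Fin n) → Finset (Fin n) := fun S₁ => Nt \ insert x (insert y S₁) with hZdef
  set C' : Finset (Fin n) → Fin n → Finset (Finset (Fin n)) := fun S₁ z =>
    (C z).filter (fun S₂ => Disjoint S₂ (insert y S₁)) with hC'def
  set D : Finset ((_ : Finset (Fin n)) × (_ : Fin n) × Finset (Fin n)) :=
    A.sigma (fun S₁ => (Z S₁).sigma (fun z => C' S₁ z)) with hDdef
  set Φ : ((_ : Finset (Fin n)) × (_ : Fin n) × Finset (Fin n)) → Finset (Fin n) :=
    fun p => p.1 ∪ insert p.2.1 p.2.2 with hΦdef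
  have hDmem : ∀ p, p ∈ D ↔ (p.1 ∈ A ∧ p.2.1 ∈ Z p.1 ∧ p.2.2 ∈ C' p.1 p.2.1) := by
    intro p
    rw [hDdef]
    simp [Finset.mem_sigma]
  -- key structural facts
  have key : ∀ p ∈ D, (Φ p).card = m ∧ x ∉ Φ p ∧ y ∉ Φ p ∧
      HasFactorOn E EF (insert x (Φ p)) ∧ HasFactorOn E EF (insert y (Φ p)) ∧
      p.2.2 = Φ p \ insert p.2.1 p.1 := by
    rintro ⟨S₁, z, S₂⟩ hp
    rw [hDmem] at hp
    obtain ⟨hS₁A, hzZ, hS₂C⟩ := hp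
    rw [hAmem] at hS₁A
    obtain ⟨hc₁, hy₁, hx₁, fy₁, fx₁⟩ := hS₁A
    rw [hZdef] at hzZ
    simp only [Finset.mem_sdiff, Finset.mem_insert, not_or] at hzZ
    obtain ⟨hzNt, hzx, hzy, hzS₁⟩ := hzZ
    rw [hC'def] at hS₂C
    simp only [Finset.mem_filter] at hS₂C
    obtain ⟨hS₂Cz, hdisj⟩ := hS₂C
    rw [hCmem] at hS₂Cz
    obtain ⟨hc₂, hx₂, hz₂, fx₂, fz₂⟩ := hS₂Cz
    rw [Finset.disjoint_insert_right] at hdisj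
    obtain ⟨hy₂, hdisj₁⟩ := hdisj
    have hdS₁S₂ : Disjoint S₁ S₂ := hdisj₁.symm
    have hdisjins : Disjoint S₁ (insert z S₂) := by
      rw [Finset.disjoint_insert_right]
      exact ⟨hzS₁, hdS₁S₂⟩
    have hΦval : Φ ⟨S₁, z, S₂⟩ = S₁ ∪ insert z S₂ := by rw [hΦdef]
    have hcard : (Φ ⟨S₁, z, S₂⟩).card = m := by
      rw [hΦval, Finset.card_union_of_disjoint hdisjins,
        Finset.card_insert_of_notMem hz₂, hc₁, hc₂]
      omega
    have hxΦ : x ∉ Φ ⟨S₁, z, S₂⟩ := by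
      rw [hΦval]
      simp only [Finset.mem_union, Finset.mem_insert, not_or]
      exact ⟨hx₁, fun h => hzx h.symm, hx₂⟩
    have hyΦ : y ∉ Φ ⟨S₁, z, S₂⟩ := by
      rw [hΦval]
      simp only [Finset.mem_union, Finset.mem_insert, not_or]
      exact ⟨hy₁, fun h => hzy h.symm, hy₂⟩
    have hdx : Disjoint (insert x S₁) (insert z S₂) := by
      rw [Finset.disjoint_insert_right, Finset.insert_eq]
      constructor
      · simp only [Finset.mem_union, Finset.mem_singleton, not_or]
        exact ⟨fun h => hzx h, hzS₁⟩
      · rw [Finset.disjoint_union_left]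
        exact ⟨Finset.disjoint_singleton_left.2 hx₂, hdS₁S₂⟩
    have hdy : Disjoint (insert y S₁) (insert z S₂) := by
      rw [Finset.disjoint_insert_right, Finset.insert_eq]
      constructor
      · simp only [Finset.mem_union, Finset.mem_singleton, not_or]
        exact ⟨fun h => hzy h, hzS₁⟩
      · rw [Finset.disjoint_union_left]
        exact ⟨Finset.disjoint_singleton_left.2 hy₂, hdS₁S₂⟩
    have hfx : HasFactorOn E EF (insert x (Φ ⟨S₁, z, S₂⟩)) := by
      rw [hΦval, ← Finset.insert_union]
      exact hasFactorOn_union fx₁ fz₂ hdx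
    have hfy : HasFactorOn E EF (insert y (Φ ⟨S₁, z, S₂⟩)) := by
      rw [hΦval, ← Finset.insert_union]
      exact hasFactorOn_union fy₁ fz₂ hdy
    refine ⟨hcard, hxΦ, hyΦ, hfx, hfy, ?_⟩
    show S₂ = _
    rw [hΦval]
    ext a
    simp only [Finset.mem_sdiff, Finset.mem_union, Finset.mem_insert, not_or]
    constructor
    · intro ha
      exact ⟨Or.inr (Or.inr ha), fun h => hz₂ (h ▸ ha),
        fun h => (Finset.disjoint_left.1 hdS₁S₂) h ha⟩
    · rintro ⟨(h | h | h), haz, haS₁⟩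
      · exact absurd h haS₁
      · exact absurd h haz
      · exact h
  -- fiber bound
  have hfib : ∀ S ∈ D.image Φ, (D.filter (fun p => Φ p = S)).card ≤ 2 ^ m * m := by
    intro S hS
    obtain ⟨p₀, hp₀D, hp₀⟩ := Finset.mem_image.1 hS
    have hScard : S.card = m := by rw [← hp₀]; exact (key p₀ hp₀D).1
    have hinj : (D.filter (fun p => Φ p = S)).card ≤ (S.powerset ×ˢ S).card := by
      apply Finset.card_le_card_of_injOn (fun p => (p.1, p.2.1))
      · intro p hp
        rw [Finset.mem_coe, Finset.mem_filter] at hp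
        obtain ⟨hpD, hpS⟩ := hp
        rw [Finset.mem_coe, Finset.mem_product, Finset.mem_powerset]
        constructor
        · rw [← hpS, hΦdef]
          exact Finset.subset_union_left
        · rw [← hpS, hΦdef]
          exact Finset.mem_union_right _ (Finset.mem_insert_self _ _)
      · intro p hp q hq hpq
        simp only [Finset.coe_filter, Set.mem_setOf_eq] at hp hq
        obtain ⟨hpD, hpS⟩ := hp
        obtain ⟨hqD, hqS⟩ := hq
        have h1 : p.1 = q.1 := congrArg Prod.fst hpq
        have h2 : p.2.1 = q.2.1 := congrArg Prod.snd hpq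
        have h3 : p.2.2 = q.2.2 := by
          rw [(key p hpD).2.2.2.2.2, (key q hqD).2.2.2.2.2, hpS, hqS, h1, h2]
        obtain ⟨a, b, c⟩ := p
        obtain ⟨a', b', c'⟩ := q
        simp only at h1 h2 h3
        subst h1; subst h2; subst h3
        rfl
    calc (D.filter (fun p => Φ p = S)).card ≤ (S.powerset ×ˢ S).card := hinj
      _ = 2 ^ m * m := by rw [Finset.card_product, Finset.card_powerset, hScard]
  -- counting D
  have hDcard : D.card = ∑ S₁ ∈ A, ∑ z ∈ Z S₁, (C' S₁ z).card := by
    rw [hDdef, Finset.card_sigma]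
    exact Finset.sum_congr rfl (fun S₁ _ => Finset.card_sigma _ _)
  have hZcard : ∀ S₁ ∈ A, ε * n / 2 ≤ ((Z S₁).card : ℝ) := by
    intro S₁ hS₁
    have hc₁ : S₁.card = m₁ := ((hAmem S₁).1 hS₁).1
    have h1 : Nt.card ≤ (Z S₁).card + (m₁ + 2) := by
      calc Nt.card ≤ (Nt \ insert x (insert y S₁)).card + (insert x (insert y S₁)).card :=
            Finset.card_le_card_sdiff_add_card
        _ ≤ (Z S₁).card + (m₁ + 2) := by
            apply Nat.add_le_add (le_of_eq (by rw [hZdef]))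
            calc (insert x (insert y S₁)).card ≤ (insert y S₁).card + 1 :=
                  Finset.card_insert_le _ _
              _ ≤ S₁.card + 1 + 1 := Nat.add_le_add_right (Finset.card_insert_le _ _) 1
              _ = m₁ + 2 := by rw [hc₁]
    have h1' : (Nt.card : ℝ) ≤ ((Z S₁).card : ℝ) + ((m₁:ℝ) + 2) := by exact_mod_cast h1
    linarith
  have hC'card : ∀ S₁ ∈ A, ∀ z ∈ Z S₁, η₂ / 2 * (n:ℝ) ^ m₂ ≤ ((C' S₁ z).card : ℝ) := by
    intro S₁ hS₁ z hz
    have hc₁ : S₁.card = m₁ := ((hAmem S₁).1 hS₁).1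
    have hzNt : z ∈ Nt := by
      rw [hZdef] at hz
      exact (Finset.mem_sdiff.1 hz).1
    have hCz := hCcard z hzNt
    have hsplit : (C' S₁ z).card + ((C z).filter (fun S₂ => ¬ Disjoint S₂ (insert y S₁))).card
        = (C z).card := by
      rw [hC'def]
      exact Finset.card_filter_add_card_filter_not _
    set bad := (C z).filter (fun S₂ => ¬ Disjoint S₂ (insert y S₁)) with hbaddef
    rcases Nat.eq_zero_or_pos m₂ with hm₂0 | hm₂1
    · have hbadempty : bad = ∅ := by
        rw [hbaddef, Finset.filter_eq_empty_iff]
        intro S₂ hS₂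
        have : S₂.card = m₂ := ((hCmem z S₂).1 hS₂).1
        have : S₂ = ∅ := Finset.card_eq_zero.1 (by rw [this, hm₂0])
        rw [this]
        simp
      rw [hbadempty, Finset.card_empty, Nat.add_zero] at hsplit
      rw [hsplit]
      nlinarith [pow_nonneg (Nat.cast_nonneg n : (0:ℝ) ≤ n) m₂]
    · have hbadsub : bad ⊆ (insert y S₁).biUnion
          (fun v => (C z).filter (fun S₂ => v ∈ S₂)) := by
        intro S₂ hS₂
        rw [hbaddef, Finset.mem_filter] at hS₂
        obtain ⟨hS₂Cz, hnd⟩ := hS₂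
        obtain ⟨a, ha₁, ha₂⟩ := Finset.not_disjoint_iff.1 hnd
        exact Finset.mem_biUnion.2 ⟨a, ha₂, Finset.mem_filter.2 ⟨hS₂Cz, ha₁⟩⟩
      have hbadcard : bad.card ≤ (m₁ + 1) * n ^ (m₂ - 1) := by
        calc bad.card ≤ ((insert y S₁).biUnion
              (fun v => (C z).filter (fun S₂ => v ∈ S₂))).card := Finset.card_le_card hbadsub
          _ ≤ ∑ v ∈ insert y S₁, ((C z).filter (fun S₂ => v ∈ S₂)).card :=
              Finset.card_biUnion_le
          _ ≤ ∑ _v ∈ insert y S₁, n ^ (m₂ - 1) := by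
              apply Finset.sum_le_sum
              intro v _
              exact count_card_mem_le v (C z) (fun S hS => ((hCmem z S).1 hS).1)
          _ = (insert y S₁).card * n ^ (m₂ - 1) := by rw [Finset.sum_const, smul_eq_mul]
          _ ≤ (m₁ + 1) * n ^ (m₂ - 1) := by
              apply Nat.mul_le_mul_right
              calc (insert y S₁).card ≤ S₁.card + 1 := Finset.card_insert_le _ _
                _ = m₁ + 1 := by rw [hc₁]
      have hbadcard' : (bad.card : ℝ) ≤ ((m₁:ℝ) + 1) * (n:ℝ) ^ (m₂ - 1) := by
        exact_mod_cast hbadcard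
      have hpow : (n:ℝ) ^ m₂ = (n:ℝ) ^ (m₂ - 1) * n := by
        rw [← pow_succ]
        congr 1
        omega
      have hsplit' : ((C' S₁ z).card : ℝ) = ((C z).card : ℝ) - (bad.card : ℝ) := by
        have := hsplit
        push_cast [← this]
        ring
      rw [hsplit']
      have hb2 : (bad.card : ℝ) ≤ η₂ / 2 * (n:ℝ) ^ m₂ := by
        calc (bad.card : ℝ) ≤ ((m₁:ℝ) + 1) * (n:ℝ) ^ (m₂ - 1) := hbadcard'
          _ ≤ (η₂ * n / 2) * (n:ℝ) ^ (m₂ - 1) := by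
              apply mul_le_mul_of_nonneg_right hcond₂ (by positivity)
          _ = η₂ / 2 * (n:ℝ) ^ m₂ := by rw [hpow]; ring
      linarith
  -- lower bound on D.card
  have hDlower : (η₁ * (n:ℝ) ^ m₁) * (ε * n / 2) * (η₂ / 2 * (n:ℝ) ^ m₂) ≤ (D.card : ℝ) := by
    have hcast : (D.card : ℝ) = ∑ S₁ ∈ A, ∑ z ∈ Z S₁, ((C' S₁ z).card : ℝ) := by
      rw [hDcard]
      push_cast
      rfl
    rw [hcast]
    have hB₃ : (0:ℝ) ≤ η₂ / 2 * (n:ℝ) ^ m₂ := by positivity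
    have hinner : ∀ S₁ ∈ A, (ε * n / 2) * (η₂ / 2 * (n:ℝ) ^ m₂) ≤
        ∑ z ∈ Z S₁, ((C' S₁ z).card : ℝ) := by
      intro S₁ hS₁
      calc (ε * n / 2) * (η₂ / 2 * (n:ℝ) ^ m₂)
          ≤ ((Z S₁).card : ℝ) * (η₂ / 2 * (n:ℝ) ^ m₂) :=
            mul_le_mul_of_nonneg_right (hZcard S₁ hS₁) hB₃
        _ ≤ ∑ z ∈ Z S₁, ((C' S₁ z).card : ℝ) := by
            have := Finset.card_nsmul_le_sum (Z S₁) (fun z => ((C' S₁ z).card : ℝ))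
              (η₂ / 2 * (n:ℝ) ^ m₂) (fun z hz => hC'card S₁ hS₁ z hz)
            rwa [nsmul_eq_mul] at this
    have hB₂₃ : (0:ℝ) ≤ (ε * n / 2) * (η₂ / 2 * (n:ℝ) ^ m₂) := by positivity
    calc (η₁ * (n:ℝ) ^ m₁) * (ε * n / 2) * (η₂ / 2 * (n:ℝ) ^ m₂)
        = (η₁ * (n:ℝ) ^ m₁) * ((ε * n / 2) * (η₂ / 2 * (n:ℝ) ^ m₂)) := by ring
      _ ≤ (A.card : ℝ) * ((ε * n / 2) * (η₂ / 2 * (n:ℝ) ^ m₂)) :=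
          mul_le_mul_of_nonneg_right hA hB₂₃
      _ ≤ ∑ S₁ ∈ A, ∑ z ∈ Z S₁, ((C' S₁ z).card : ℝ) := by
          have := Finset.card_nsmul_le_sum A (fun S₁ => ∑ z ∈ Z S₁, ((C' S₁ z).card : ℝ))
            ((ε * n / 2) * (η₂ / 2 * (n:ℝ) ^ m₂)) hinner
          rwa [nsmul_eq_mul] at this
  -- image bound
  have himage : (D.card : ℝ) ≤ (2:ℝ) ^ m * m * ((D.image Φ).card : ℝ) := by
    have := Finset.card_le_mul_card_image D (2 ^ m * m) hfib
    exact_mod_cast this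
  -- final inclusion
  have hsub : ↑(D.image Φ) ⊆ {S : Finset (Fin n) | S.card = m ∧ x ∉ S ∧ y ∉ S ∧
      HasFactorOn E EF (insert x S) ∧ HasFactorOn E EF (insert y S)} := by
    intro S hS
    obtain ⟨p, hpD, hpS⟩ := Finset.mem_image.1 (Finset.mem_coe.1 hS)
    obtain ⟨h1, h2, h3, h4, h5, _⟩ := key p hpD
    rw [hpS] at h1 h2 h3 h4 h5
    exact ⟨h1, h2, h3, h4, h5⟩
  have hncard : ((D.image Φ).card : ℝ) ≤
      (({S : Finset (Fin n) | S.card = m ∧ x ∉ S ∧ y ∉ S ∧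
        HasFactorOn E EF (insert x S) ∧ HasFactorOn E EF (insert y S)}).ncard : ℝ) := by
    have := Set.ncard_le_ncard hsub (Set.toFinite _)
    rw [Set.ncard_coe_finset] at this
    exact_mod_cast this
  -- conclude
  simp only [CloseTo, Fintype.card_fin, ← hmdef]
  have hpowm : (n:ℝ) ^ m = (n:ℝ) ^ m₁ * n * (n:ℝ) ^ m₂ := by
    rw [hmm, pow_add, pow_add, pow_one]
  rw [div_mul_eq_mul_div, div_le_iff₀ hcpos]
  calc η₁ * (ε / 2) * (η₂ / 2) * (n:ℝ) ^ m
      = (η₁ * (n:ℝ) ^ m₁) * (ε * n / 2) * (η₂ / 2 * (n:ℝ) ^ m₂) := by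
        rw [hpowm]; ring
    _ ≤ (D.card : ℝ) := hDlower
    _ ≤ (2:ℝ) ^ m * m * ((D.image Φ).card : ℝ) := himage
    _ ≤ (2:ℝ) ^ m * m * (({S : Finset (Fin n) | S.card = m ∧ x ∉ S ∧ y ∉ S ∧
          HasFactorOn E EF (insert x S) ∧ HasFactorOn E EF (insert y S)}).ncard : ℝ) :=
        mul_le_mul_of_nonneg_left hncard (le_of_lt hcpos)
    _ = _ := by ring
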